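/- Let λ > 0, ℓ > 0 and β > 0, and set a = exp(−βλℓ). The mapping x_β(q) = ℓ + (1/(βλ))·ln(q + (1 − q)·a), defined for q ∈ [0, 1], satisfies x_β(0) = 0 and x_β(1) = ℓ, and satisfies the equidistribution identity (λ·exp(λ(x_β(q) − ℓ)))^β · x_β'(q) = λ^{β−1}·(1 − a)/β for all q ∈ [0, 1], i.e. the monitor function ω_β(x) = (u'(x))^β with u(x) = exp(λ(x − ℓ)) is equidistributed by x_β. -/

import Mathlib

/-- for λ, ℓ, β > 0 and a = exp(−βλℓ), the mapping
x_β(q) = ℓ + (1/(βλ))·ln(q + (1 − q)·a) satisfies x_β(0) = 0, x_β(1) = ℓ and the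
equidistribution identity (λ·exp(λ(x_β(q) − ℓ)))^β · x_β'(q) = λ^{β−1}·(1 − a)/β
for all q ∈ [0, 1]. -/
theorem stmt_5 (lam ℓ β : ℝ) (hlam : 0 < lam) (hℓ : 0 < ℓ) (hβ : 0 < β)
    (a : ℝ) (ha : a = Real.exp (-(β * lam * ℓ)))
    (x : ℝ → ℝ)
    (hx : x = fun q : ℝ => ℓ + 1 / (β * lam) * Real.log (q + (1 - q) * a)) :
    x 0 = 0 ∧ x 1 = ℓ ∧
      ∀ q ∈ Set.Icc (0 : ℝ) 1,
        (lam * Real.exp (lam * (x q - ℓ))) ^ β * deriv x q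
          = lam ^ (β - 1) * (1 - a) / β := by
  have hbl : β * lam ≠ 0 := by positivity
  have ha0 : 0 < a := by rw [ha]; exact Real.exp_pos _
  refine ⟨?_, ?_, ?_⟩
  · simp only [hx, ha]
    rw [show (0:ℝ) + (1 - 0) * Real.exp (-(β * lam * ℓ)) = Real.exp (-(β * lam * ℓ)) by ring,
      Real.log_exp]
    field_simp
    ring
  · simp only [hx]
    norm_num
  · intro q hq
    obtain ⟨hq0, hq1⟩ := hq
    set s : ℝ := q + (1 - q) * a with hs
    have hspos : 0 < s := by
      rcases eq_or_lt_of_le hq0 with h | h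
      · rw [hs, ← h]; nlinarith
      · nlinarith [mul_nonneg (by linarith : (0:ℝ) ≤ 1 - q) ha0.le]
    -- derivative
    have hf : HasDerivAt (fun q : ℝ => q + (1 - q) * a) (1 + -1 * a) q := by
      exact (hasDerivAt_id q).add (((hasDerivAt_id q).const_sub 1).mul_const a)
    have hlog : HasDerivAt (fun q : ℝ => Real.log (q + (1 - q) * a))
        (s⁻¹ * (1 + -1 * a)) q := by
      have := (Real.hasDerivAt_log hspos.ne').comp q hf; exact this
    have hx' : HasDerivAt x (1 / (β * lam) * (s⁻¹ * (1 + -1 * a))) q := by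
      rw [hx]
      exact (hlog.const_mul (1 / (β * lam))).const_add ℓ
    have hderiv : deriv x q = 1 / (β * lam) * (s⁻¹ * (1 - a)) := by
      rw [hx'.deriv]; ring
    -- the exponential
    have hexp : Real.exp (lam * (x q - ℓ)) = s ^ (1 / β) := by
      rw [hx]
      simp only []
      rw [show lam * (ℓ + 1 / (β * lam) * Real.log (q + (1 - q) * a) - ℓ)
          = 1 / β * Real.log s by field_simp; ring]
      rw [Real.rpow_def_of_pos hspos]
      ring_nf
    rw [hderiv, hexp, Real.mul_rpow hlam.le (Real.rpow_nonneg hspos.le _),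
      ← Real.rpow_mul hspos.le, one_div, inv_mul_cancel₀ hβ.ne', Real.rpow_one,
      Real.rpow_sub hlam, Real.rpow_one]
    field_simp
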